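/- Let r ≥ 1 and let A = M^{2^r} + M^{2^r - 1} + ⋯ + M + 1 = Σ_{i=0}^{2^r} M^i in F_2[x]. Then for every 0 ≤ k ≤ 2^r - 2, A_{2k+1} = 1 + M^{k+1}(M+1)^{2^r - k - 1} (so deg(A_{2k+1}) = deg(A)), A_{2(2^r - 1)+1} = 1, and the length ℓ_A equals 2^r. -/
import Mathlib


open Polynomial Finset

/-- The polynomial `M = x^2 + x + 1` over `F_2`. -/
noncomputable def M : Polynomial (ZMod 2) := X ^ 2 + X + 1

/-- The odd part of a binary polynomial: `P` divided by `x^{val_x(P)} (x+1)^{val_{x+1}(P)}`. -/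
noncomputable def oddPart (P : Polynomial (ZMod 2)) : Polynomial (ZMod 2) :=
  P / (X ^ P.rootMultiplicity 0 * (X + 1) ^ P.rootMultiplicity 1)

/-- The Collatz sequence of a binary polynomial `A`:
`A_0 = A`, `A_{2k+1} = oddPart A_{2k}`, `A_{2k+2} = 1 + M * A_{2k+1}`. -/
noncomputable def collatz (A : Polynomial (ZMod 2)) : ℕ → Polynomial (ZMod 2)
  | 0 => A
  | n + 1 => if n % 2 = 0 then oddPart (collatz A n) else 1 + M * collatz A n

/-- `a_k`: the multiplicity of `x` in `A_k`. -/
noncomputable def aSeq (A : Polynomial (ZMod 2)) (k : ℕ) : ℕ :=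
  (collatz A k).rootMultiplicity 0

/-- `b_k`: the multiplicity of `x + 1` in `A_k`. -/
noncomputable def bSeq (A : Polynomial (ZMod 2)) (k : ℕ) : ℕ :=
  (collatz A k).rootMultiplicity 1

/-- The length `ℓ_A = m + 1`, where `m` is the least nonnegative integer
with `A_{2m+1} = 1`. -/
noncomputable def collatzLength (A : Polynomial (ZMod 2)) : ℕ :=
  sInf {m : ℕ | collatz A (2 * m + 1) = 1} + 1

lemma X1eq : (X : Polynomial (ZMod 2)) + 1 = X - C 1 := by
  rw [map_one, sub_eq_add_neg, CharTwo.neg_eq]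

lemma hX1ne : (X : Polynomial (ZMod 2)) + 1 ≠ 0 := by
  rw [X1eq]; exact X_sub_C_ne_zero 1

lemma hM1 : M + 1 = X * (X + 1) := by
  unfold M
  have h2 : (1 : Polynomial (ZMod 2)) + 1 = 0 := CharTwo.add_self_eq_zero 1
  linear_combination h2

lemma hMne : M ≠ 0 := by
  intro h
  have := congrArg (eval 0) h
  simp [M] at this

lemma hM1ne : M + 1 ≠ 0 := by rw [hM1]; exact mul_ne_zero X_ne_zero hX1ne

lemma evalM0 : M.eval 0 = 1 := by simp [M]
lemma evalM1 : M.eval 1 = 1 := by simp [M]; decide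

lemma oddPart_aux (a b : ℕ) (Q : Polynomial (ZMod 2)) (h0 : Q.eval 0 ≠ 0)
    (h1 : Q.eval 1 ≠ 0) : oddPart (X ^ a * (X + 1) ^ b * Q) = Q := by
  have hQ : Q ≠ 0 := fun h => h0 (by simp [h])
  have hXa : (X : Polynomial (ZMod 2)) ^ a ≠ 0 := pow_ne_zero _ X_ne_zero
  have hX1b : ((X : Polynomial (ZMod 2)) + 1) ^ b ≠ 0 := pow_ne_zero _ hX1ne
  have hP : X ^ a * (X + 1) ^ b * Q ≠ 0 := mul_ne_zero (mul_ne_zero hXa hX1b) hQ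
  have rX0 : rootMultiplicity (0 : ZMod 2) ((X : Polynomial (ZMod 2)) ^ a) = a := by
    simpa using rootMultiplicity_X_sub_C_pow (R := ZMod 2) 0 a
  have rX11 : rootMultiplicity (1 : ZMod 2) (((X : Polynomial (ZMod 2)) + 1) ^ b) = b := by
    rw [X1eq]; exact rootMultiplicity_X_sub_C_pow (R := ZMod 2) 1 b
  have rX10 : rootMultiplicity (0 : ZMod 2) (((X : Polynomial (ZMod 2)) + 1) ^ b) = 0 := by
    apply rootMultiplicity_eq_zero; simp [IsRoot]
  have rX1 : rootMultiplicity (1 : ZMod 2) ((X : Polynomial (ZMod 2)) ^ a) = 0 := by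
    apply rootMultiplicity_eq_zero; simp [IsRoot]
  have rQ0 : rootMultiplicity (0 : ZMod 2) Q = 0 := rootMultiplicity_eq_zero h0
  have rQ1 : rootMultiplicity (1 : ZMod 2) Q = 0 := rootMultiplicity_eq_zero h1
  have r0 : (X ^ a * (X + 1) ^ b * Q).rootMultiplicity 0 = a := by
    rw [rootMultiplicity_mul hP, rootMultiplicity_mul (mul_ne_zero hXa hX1b),
      rX0, rX10, rQ0]; omega
  have r1 : (X ^ a * (X + 1) ^ b * Q).rootMultiplicity 1 = b := by
    rw [rootMultiplicity_mul hP, rootMultiplicity_mul (mul_ne_zero hXa hX1b),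
      rX11, rX1, rQ1]; omega
  unfold oddPart
  rw [r0, r1, mul_div_cancel_left₀ _ (mul_ne_zero hXa hX1b)]

lemma oddPart_of_odd (Q : Polynomial (ZMod 2)) (h0 : Q.eval 0 ≠ 0)
    (h1 : Q.eval 1 ≠ 0) : oddPart Q = Q := by
  have := oddPart_aux 0 0 Q h0 h1
  simpa using this

lemma collatz_odd (A : Polynomial (ZMod 2)) (k : ℕ) :
    collatz A (2 * k + 1) = oddPart (collatz A (2 * k)) := by
  rw [collatz]; simp

lemma collatz_even (A : Polynomial (ZMod 2)) (k : ℕ) :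
    collatz A (2 * k + 2) = 1 + M * collatz A (2 * k + 1) := by
  have h : (2 * k + 1) % 2 = 1 := by omega
  show collatz A ((2 * k + 1) + 1) = _
  rw [collatz, h]; simp

lemma key_step (A : Polynomial (ZMod 2)) (k t : ℕ)
    (h : collatz A (2 * k + 1) = 1 + M ^ (k + 1) * (M + 1) ^ (t + 2)) :
    collatz A (2 * k + 3) = 1 + M ^ (k + 2) * (M + 1) ^ (t + 1) := by
  have he : collatz A (2 * k + 2) = 1 + M * collatz A (2 * k + 1) := collatz_even A k
  have hfac : (1 : Polynomial (ZMod 2)) + M * (1 + M ^ (k + 1) * (M + 1) ^ (t + 2))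
      = X ^ 1 * (X + 1) ^ 1 * (1 + M ^ (k + 2) * (M + 1) ^ (t + 1)) := by
    rw [pow_one, pow_one, ← hM1]; ring
  have e2 : (1 : ZMod 2) + 1 = 0 := by decide
  have hQ0 : (1 + M ^ (k + 2) * (M + 1) ^ (t + 1)).eval 0 ≠ 0 := by
    simp [eval_add, eval_mul, eval_pow, evalM0, e2]
  have hQ1 : (1 + M ^ (k + 2) * (M + 1) ^ (t + 1)).eval 1 ≠ 0 := by
    simp [eval_add, eval_mul, eval_pow, evalM1, e2]
  have h3 := collatz_odd A (k + 1)
  rw [show 2 * (k + 1) + 1 = 2 * k + 3 by ring, show 2 * (k + 1) = 2 * k + 2 by ring] at h3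
  rw [h3, he, h, hfac, oddPart_aux _ _ _ hQ0 hQ1]

lemma final_step (A : Polynomial (ZMod 2)) (r k : ℕ) (hk : k + 2 = 2 ^ r)
    (h : collatz A (2 * k + 1) = 1 + M ^ (k + 1) * (M + 1) ^ 1) :
    collatz A (2 * k + 3) = 1 := by
  have he : collatz A (2 * k + 2) = 1 + M * collatz A (2 * k + 1) := collatz_even A k
  have frob : (M + 1) ^ 2 ^ r = M ^ 2 ^ r + 1 := by
    have := add_pow_char_pow M 1 2 r
    simpa using this
  have hfac : (1 : Polynomial (ZMod 2)) + M * (1 + M ^ (k + 1) * (M + 1) ^ 1)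
      = X ^ (2 ^ r + 1) * (X + 1) ^ (2 ^ r + 1) * 1 := by
    rw [mul_one, ← mul_pow, ← hM1]
    have h2 : M + M = 0 := CharTwo.add_self_eq_zero M
    rw [← hk] at frob ⊢
    calc (1 : Polynomial (ZMod 2)) + M * (1 + M ^ (k + 1) * (M + 1) ^ 1)
        = (M + 1) * (1 + M ^ (k + 2)) := by ring
      _ = (M + 1) * ((M + 1) ^ (k + 2)) := by rw [frob]; ring
      _ = (M + 1) ^ (k + 2 + 1) := by ring
  have h3 := collatz_odd A (k + 1)
  rw [show 2 * (k + 1) + 1 = 2 * k + 3 by ring, show 2 * (k + 1) = 2 * k + 2 by ring] at h3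
  rw [h3, he, h, hfac, oddPart_aux _ _ _ (by simp) (by simp)]

lemma geom_eq (r m : ℕ) (hm : 2 ^ r = m + 1) :
    (∑ i ∈ Finset.range (2 ^ r + 1), M ^ i) = 1 + M * (M + 1) ^ m := by
  apply mul_right_cancel₀ hM1ne
  have frob : (M + 1) ^ (m + 1) = M ^ (m + 1) + 1 := by
    have := add_pow_char_pow M 1 2 r
    rw [hm] at this; simpa using this
  have h2 : M + M = 0 := CharTwo.add_self_eq_zero M
  have hL : (∑ i ∈ Finset.range (m + 2), M ^ i) * (M + 1) = M ^ (m + 2) + 1 := by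
    rw [show M + 1 = M - 1 from (CharTwo.sub_eq_add M 1).symm,
      show M ^ (m + 2) + 1 = M ^ (m + 2) - 1 from (CharTwo.sub_eq_add _ 1).symm]
    exact geom_sum_mul M (m + 2)
  rw [hm]
  rw [show m + 1 + 1 = m + 2 from rfl] at *
  rw [hL]
  linear_combination -(M * frob) - h2

lemma evalM10 : (M + 1).eval 0 = 0 := by rw [eval_add, evalM0, eval_one]; decide
lemma evalM11 : (M + 1).eval 1 = 0 := by rw [eval_add, evalM1, eval_one]; decide
lemma natDegM : M.natDegree = 2 := by unfold M; compute_degree!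
lemma natDegM1 : (M + 1).natDegree = 2 := by
  rw [hM1, natDegree_mul X_ne_zero hX1ne, natDegree_X, X1eq, natDegree_X_sub_C]

lemma deg_form (i j : ℕ) (hi : 1 ≤ i) :
    (1 + M ^ i * (M + 1) ^ j).natDegree = 2 * i + 2 * j := by
  have hp : (M ^ i * (M + 1) ^ j).natDegree = 2 * i + 2 * j := by
    rw [natDegree_mul (pow_ne_zero _ hMne) (pow_ne_zero _ hM1ne),
      natDegree_pow, natDegree_pow, natDegM, natDegM1]; ring
  rw [natDegree_add_eq_right_of_natDegree_lt, hp]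
  rw [hp, natDegree_one]; omega

theorem length_geom_sum_pow_two (r : ℕ) (hr : 1 ≤ r)
    (A : Polynomial (ZMod 2)) (hA : A = ∑ i ∈ Finset.range (2 ^ r + 1), M ^ i) :
    (∀ k : ℕ, k ≤ 2 ^ r - 2 →
      collatz A (2 * k + 1) = 1 + M ^ (k + 1) * (M + 1) ^ (2 ^ r - k - 1) ∧
      (collatz A (2 * k + 1)).natDegree = A.natDegree) ∧
    collatz A (2 * (2 ^ r - 1) + 1) = 1 ∧
    collatzLength A = 2 ^ r := by
  have hn : 2 ≤ 2 ^ r := by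
    calc 2 = 2 ^ 1 := rfl
    _ ≤ 2 ^ r := Nat.pow_le_pow_right (by norm_num) hr
  obtain ⟨m, hm⟩ : ∃ m, 2 ^ r = m + 2 := ⟨2 ^ r - 2, by omega⟩
  have hA1 : A = 1 + M * (M + 1) ^ (m + 1) := by
    rw [hA, geom_eq r (m + 1) (by omega)]
  have hAdeg : A.natDegree = 2 * (m + 2) := by
    rw [hA1, show M * (M + 1) ^ (m + 1) = M ^ 1 * (M + 1) ^ (m + 1) by ring,
      deg_form 1 (m + 1) le_rfl]; ring
  have main : ∀ k, k ≤ 2 ^ r - 2 →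
      collatz A (2 * k + 1) = 1 + M ^ (k + 1) * (M + 1) ^ (2 ^ r - k - 1) := by
    intro k
    induction k with
    | zero =>
      intro _
      have e2 : (1 : ZMod 2) + 1 = 0 := by decide
      have h0 : A.eval 0 ≠ 0 := by
        rw [hA1]; simp [eval_add, eval_mul, eval_pow, evalM0, e2]
      have h1 : A.eval 1 ≠ 0 := by
        rw [hA1]; simp [eval_add, eval_mul, eval_pow, evalM1, e2]
      rw [collatz_odd A 0, show collatz A (2 * 0) = A from rfl, oddPart_of_odd A h0 h1, hA1,
        show 2 ^ r - 2 * 0 - 1 = m + 1 by omega]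
      ring
    | succ k ih =>
      intro hk
      have hk' : k ≤ 2 ^ r - 2 := by omega
      have e : 2 ^ r - k - 1 = (2 ^ r - k - 3) + 2 := by omega
      have hstep := key_step A k (2 ^ r - k - 3) (by rw [← e]; exact ih hk')
      rw [show 2 * (k + 1) + 1 = 2 * k + 3 by ring, hstep,
        show 2 ^ r - (k + 1) - 1 = (2 ^ r - k - 3) + 1 by omega]
  have fin : collatz A (2 * (2 ^ r - 1) + 1) = 1 := by
    have hmain := main m (by omega)
    rw [show 2 ^ r - m - 1 = 1 by omega] at hmain
    have := final_step A r m (by omega) hmain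
    rw [show 2 * (2 ^ r - 1) + 1 = 2 * m + 3 by omega]
    exact this
  refine ⟨fun k hk => ⟨main k hk, ?_⟩, fin, ?_⟩
  · rw [main k hk, deg_form (k + 1) (2 ^ r - k - 1) (by omega), hAdeg]
    omega
  · have hne : ∀ k, k ≤ 2 ^ r - 2 → collatz A (2 * k + 1) ≠ 1 := by
      intro k hk h
      rw [main k hk] at h
      have : M ^ (k + 1) * (M + 1) ^ (2 ^ r - k - 1) = 0 := add_eq_left.mp h
      exact (mul_ne_zero (pow_ne_zero _ hMne) (pow_ne_zero _ hM1ne)) this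
    have hmm : (2 ^ r - 1) ∈ {m : ℕ | collatz A (2 * m + 1) = 1} := fin
    have hlb : ∀ j ∈ {m : ℕ | collatz A (2 * m + 1) = 1}, 2 ^ r - 1 ≤ j := by
      intro j hj
      by_contra hlt
      exact hne j (by omega) hj
    have : sInf {m : ℕ | collatz A (2 * m + 1) = 1} = 2 ^ r - 1 :=
      le_antisymm (Nat.sInf_le hmm) (le_csInf ⟨_, hmm⟩ hlb)
    unfold collatzLength
    rw [this]
    omega
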